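/- The function l(θ) = (π/2)·θ·(1−θ)/cos²((π/2)·θ) − tan((π/2)·θ) is monotone nonincreasing on [0,1): for all θ₁, θ₂ with 0 ≤ θ₁ ≤ θ₂ < 1, l(θ₂) ≤ l(θ₁). -/

import Mathlib

open Real

private lemma aux {y : ℝ} (h0 : 0 < y) (h2 : y < π/2) : y * Real.cos y ≤ Real.sin y := by
  have hcy : 0 < Real.cos y := Real.cos_pos_of_mem_Ioo ⟨by linarith [Real.pi_pos], h2⟩
  have ht := Real.lt_tan h0 h2
  rw [Real.tan_eq_sin_div_cos, lt_div_iff₀ hcy] at ht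
  linarith

private lemma key_ineq {θ : ℝ} (h0 : 0 < θ) (h1 : θ < 1) :
    π/2 * (1 - θ) * Real.sin (π/2 * θ) ≤ Real.cos (π/2 * θ) := by
  have hπ : 0 < π := Real.pi_pos
  have hy0 : 0 < π/2 * (1 - θ) := by
    apply mul_pos (by linarith) (by linarith)
  have hy2 : π/2 * (1 - θ) < π/2 := by nlinarith
  have h := aux hy0 hy2
  have e1 : Real.cos (π/2 * (1 - θ)) = Real.sin (π/2 * θ) := by
    rw [show π/2 * (1 - θ) = π/2 - π/2 * θ by ring, Real.cos_pi_div_two_sub]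
  have e2 : Real.sin (π/2 * (1 - θ)) = Real.cos (π/2 * θ) := by
    rw [show π/2 * (1 - θ) = π/2 - π/2 * θ by ring, Real.sin_pi_div_two_sub]
  rw [e1, e2] at h
  exact h

private lemma anti : AntitoneOn
    (fun θ : ℝ => π/2 * (θ * (1 - θ)) / Real.cos (π/2 * θ) ^ 2
      - Real.sin (π/2 * θ) / Real.cos (π/2 * θ)) (Set.Ico 0 1) := by
  have hπ : 0 < π := Real.pi_pos
  have hcpos : ∀ θ ∈ Set.Ico (0:ℝ) 1, 0 < Real.cos (π/2 * θ) := by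
    intro θ ⟨h0, h1⟩
    exact Real.cos_pos_of_mem_Ioo ⟨by nlinarith, by nlinarith⟩
  -- derivative computation
  have hderiv : ∀ θ ∈ Set.Ioo (0:ℝ) 1, HasDerivAt
      (fun θ : ℝ => π/2 * (θ * (1 - θ)) / Real.cos (π/2 * θ) ^ 2
        - Real.sin (π/2 * θ) / Real.cos (π/2 * θ))
      (((π/2 * (1 - 2*θ)) * Real.cos (π/2 * θ) ^ 2
          - π/2 * (θ * (1 - θ)) * (2 * Real.cos (π/2 * θ) * (-Real.sin (π/2 * θ) * (π/2))))
        / (Real.cos (π/2 * θ) ^ 2) ^ 2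
       - ((Real.cos (π/2 * θ) * (π/2)) * Real.cos (π/2 * θ)
          - Real.sin (π/2 * θ) * (-Real.sin (π/2 * θ) * (π/2))) / Real.cos (π/2 * θ) ^ 2) θ := by
    intro θ hθ
    have hc := hcpos θ (Set.Ioo_subset_Ico_self hθ)
    have h1 : HasDerivAt (fun θ : ℝ => π/2 * θ) (π/2) θ := by
      simpa using (hasDerivAt_id θ).const_mul (π/2)
    have hcos : HasDerivAt (fun θ : ℝ => Real.cos (π/2 * θ))
        (-Real.sin (π/2 * θ) * (π/2)) θ := (Real.hasDerivAt_cos (π/2 * θ)).comp θ h1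
    have hsin : HasDerivAt (fun θ : ℝ => Real.sin (π/2 * θ))
        (Real.cos (π/2 * θ) * (π/2)) θ := (Real.hasDerivAt_sin (π/2 * θ)).comp θ h1
    have hnum : HasDerivAt (fun θ : ℝ => π/2 * (θ * (1 - θ))) (π/2 * (1 - 2*θ)) θ := by
      have : HasDerivAt (fun θ : ℝ => θ * (1 - θ)) (1 - 2*θ) θ := by
        have := (hasDerivAt_id θ).mul ((hasDerivAt_const θ (1:ℝ)).sub (hasDerivAt_id θ))
        refine this.congr_deriv ?_; simp [id]; ring
      simpa using this.const_mul (π/2)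
    have hden : HasDerivAt (fun θ : ℝ => Real.cos (π/2 * θ) ^ 2)
        (2 * Real.cos (π/2 * θ) * (-Real.sin (π/2 * θ) * (π/2))) θ := by
      have := hcos.pow 2
      refine this.congr_deriv ?_; norm_num
    exact (hnum.div hden (by positivity)).sub (hsin.div hcos hc.ne')
  apply antitoneOn_of_deriv_nonpos (convex_Ico 0 1)
  · apply ContinuousOn.sub
    · apply ContinuousOn.div
      · fun_prop
      · fun_prop
      · intro θ hθ; exact (pow_ne_zero 2 (hcpos θ hθ).ne')
    · apply ContinuousOn.div
      · fun_prop
      · fun_prop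
      · intro θ hθ; exact (hcpos θ hθ).ne'
  · rw [interior_Ico]
    intro θ hθ
    exact (hderiv θ hθ).differentiableAt.differentiableWithinAt
  · rw [interior_Ico]
    intro θ hθ
    rw [(hderiv θ hθ).deriv]
    obtain ⟨h0, h1⟩ := hθ
    have hc := hcpos θ ⟨le_of_lt h0, h1⟩
    set c := Real.cos (π/2 * θ)
    set s := Real.sin (π/2 * θ)
    have hpyth : s ^ 2 + c ^ 2 = 1 := Real.sin_sq_add_cos_sq _
    have hkey : π/2 * (1 - θ) * s ≤ c := key_ineq h0 h1
    have hs0 : 0 ≤ s := Real.sin_nonneg_of_nonneg_of_le_pi (by nlinarith) (by nlinarith)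
    have h2 : (c * (π/2)) * c - s * (-s * (π/2)) = π/2 := by
      linear_combination (π/2) * hpyth
    have heq : ((π/2 * (1 - 2*θ)) * c ^ 2 - π/2 * (θ * (1 - θ)) * (2 * c * (-s * (π/2))))
        / (c ^ 2) ^ 2 - ((c * (π/2)) * c - s * (-s * (π/2))) / c ^ 2
        = (2 * (π/2) * θ * (π/2 * (1 - θ) * s - c)) / c ^ 3 := by
      rw [h2]; field_simp [hc.ne']; ring
    rw [heq]
    apply div_nonpos_of_nonpos_of_nonneg
    · have : π/2 * (1 - θ) * s - c ≤ 0 := by linarith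
      have h2' : 0 ≤ 2 * (π/2) * θ := by positivity
      exact mul_nonpos_of_nonneg_of_nonpos h2' this
    · positivity

/-- l(θ) = (π/2)·θ(1−θ)/cos²((π/2)θ) − tan((π/2)θ) is monotone nonincreasing on [0,1). -/
theorem stmt_6 (l : ℝ → ℝ)
    (hl : ∀ θ, l θ = π/2 * (θ * (1 - θ)) / Real.cos (π/2 * θ) ^ 2 - Real.tan (π/2 * θ)) :
    ∀ θ₁ θ₂ : ℝ, 0 ≤ θ₁ → θ₁ ≤ θ₂ → θ₂ < 1 → l θ₂ ≤ l θ₁ := by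
  intro θ₁ θ₂ h0 h12 h2
  rw [hl, hl, Real.tan_eq_sin_div_cos, Real.tan_eq_sin_div_cos]
  exact anti ⟨h0, lt_of_le_of_lt h12 h2⟩ ⟨le_trans h0 h12, h2⟩ h12
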